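/- For every positive integer m, every natural number ℓ with 0 ≤ ℓ ≤ m−1, and every rational x, one has ∑_{k=0, k+m odd}^{m-1} C(m,k)·C(k+m,ℓ)·B_{k+m−ℓ}(x) = (1/2)·∑_{j=0}^{m} (−1)^{j+m}·C(m,j)·C(j+m−1,ℓ)·(j+m)·x^{j+m−ℓ−1}, where the sum on the left runs only over those indices k in {0,…,m−1} for which k+m is odd. -/
import Mathlib
open Finset Polynomial

noncomputable def phi : Polynomial ℚ →ₗ[ℚ] Polynomial ℚ where
  toFun p := p.sum fun n a => a • Polynomial.bernoulli n
  map_add' p q := Polynomial.sum_add_index p q _ (fun i => zero_smul _ _)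
    (fun i a b => add_smul a b _)
  map_smul' c p := by
    simp only [RingHom.id_apply]
    rw [Polynomial.sum_smul_index p c (fun n a => a • Polynomial.bernoulli n)
      (fun i => zero_smul ℚ _), Polynomial.smul_sum]
    simp [mul_smul]

@[simp] lemma phi_monomial (n : ℕ) (a : ℚ) : phi (monomial n a) = a • Polynomial.bernoulli n := by
  simp only [phi, LinearMap.coe_mk, AddHom.coe_mk]
  exact Polynomial.sum_monomial_index a _ (zero_smul ℚ _)

@[simp] lemma phi_X_pow (n : ℕ) : phi ((X : Polynomial ℚ) ^ n) = Polynomial.bernoulli n := by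
  rw [X_pow_eq_monomial, phi_monomial, one_smul]

lemma phi_add_one_pow (n : ℕ) (hn : 0 < n) :
    phi (((X : Polynomial ℚ) + 1) ^ n)
      = monomial (n - 1) (n : ℚ) + Polynomial.bernoulli n := by
  have hexp : ((X : Polynomial ℚ) + 1) ^ n
      = ∑ i ∈ range (n + 1), monomial i ((n.choose i : ℚ)) := by
    rw [add_pow]
    refine Finset.sum_congr rfl fun i _ => ?_
    rw [one_pow, mul_one, ← C_eq_natCast, X_pow_mul_C, C_mul_X_pow_eq_monomial]
  rw [hexp, map_sum]
  simp only [phi_monomial]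
  obtain ⟨t, rfl⟩ := Nat.exists_eq_add_of_le hn
  rw [show 1 + t = t + 1 by omega, Finset.sum_range_succ]
  simp only [Nat.choose_self, Nat.cast_one, one_smul, Nat.add_sub_cancel]
  rw [Polynomial.sum_bernoulli]
  push_cast
  ring_nf

lemma negpow {R : Type*} [Ring R] (k m : ℕ) (h : k ≤ m) :
    ((-1 : R)) ^ (m - k) = (-1) ^ (k + m) := by
  obtain ⟨d, rfl⟩ := Nat.exists_eq_add_of_le h
  rw [Nat.add_sub_cancel_left, show k + (k + d) = 2 * k + d by ring, pow_add, pow_mul]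
  simp

lemma poly_key (m : ℕ) (hm : 0 < m) :
    ∑ k ∈ range (m + 1),
        ((m.choose k : ℚ) - (-1) ^ (k + m) * m.choose k) • Polynomial.bernoulli (k + m)
      = ∑ k ∈ range (m + 1),
        ((-1 : ℚ) ^ (k + m) * m.choose k) • monomial (k + m - 1) ((k + m : ℕ) : ℚ) := by
  have B1 : ∑ k ∈ range (m + 1), (m.choose k : ℚ) • (X : Polynomial ℚ) ^ (k + m)
      = X ^ m * (X + 1) ^ m := by
    rw [add_pow, Finset.mul_sum]
    refine Finset.sum_congr rfl fun k hk => ?_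
    rw [smul_eq_C_mul, C_eq_natCast]
    push_cast
    ring
  have B2 : ∑ k ∈ range (m + 1), ((-1 : ℚ) ^ (k + m) * m.choose k) • (X : Polynomial ℚ) ^ (k + m)
      = X ^ m * (X - 1) ^ m := by
    rw [show (X - 1 : Polynomial ℚ) = X + (-1) by ring, add_pow, Finset.mul_sum]
    refine Finset.sum_congr rfl fun k hk => ?_
    rw [negpow k m (Nat.lt_succ_iff.mp (mem_range.mp hk)), smul_eq_C_mul, map_mul, map_pow,
      map_neg, map_one, C_eq_natCast]
    push_cast
    ring
  have B3 : ∑ k ∈ range (m + 1),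
        ((-1 : ℚ) ^ (k + m) * m.choose k) • ((X : Polynomial ℚ) + 1) ^ (k + m)
      = X ^ m * (X + 1) ^ m := by
    have : (X : Polynomial ℚ) ^ m = ((X + 1) + (-1)) ^ m := by ring_nf
    rw [this, add_pow, Finset.sum_mul]
    refine Finset.sum_congr rfl fun k hk => ?_
    rw [negpow k m (Nat.lt_succ_iff.mp (mem_range.mp hk)), smul_eq_C_mul, map_mul, map_pow,
      map_neg, map_one, C_eq_natCast, pow_add]
    push_cast
    ring
  have e1 : ∑ k ∈ range (m + 1), (m.choose k : ℚ) • Polynomial.bernoulli (k + m)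
      = phi (X ^ m * (X + 1) ^ m) := by
    rw [← B1, map_sum]
    simp
  have e2 : ∑ k ∈ range (m + 1), ((-1 : ℚ) ^ (k + m) * m.choose k) • Polynomial.bernoulli (k + m)
      = phi (X ^ m * (X - 1) ^ m) := by
    rw [← B2, map_sum]
    simp
  have e3 : phi ((X : Polynomial ℚ) ^ m * (X + 1) ^ m)
      = (∑ k ∈ range (m + 1),
          ((-1 : ℚ) ^ (k + m) * m.choose k) • monomial (k + m - 1) ((k + m : ℕ) : ℚ))
        + ∑ k ∈ range (m + 1), ((-1 : ℚ) ^ (k + m) * m.choose k) • Polynomial.bernoulli (k + m) := by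
    rw [← B3, map_sum]
    rw [← Finset.sum_add_distrib]
    refine Finset.sum_congr rfl fun k hk => ?_
    rw [map_smul, phi_add_one_pow (k + m) (by omega), smul_add]
  simp only [sub_smul, Finset.sum_sub_distrib]
  rw [e1, e3, e2]
  abel

lemma natid (n ℓ : ℕ) :
    n * (ℓ.factorial * (n - 1).choose ℓ) = (ℓ + 1).factorial * n.choose (ℓ + 1) := by
  cases n with
  | zero => simp
  | succ s =>
    have h : (s + 1) * s.choose ℓ = (s + 1).choose (ℓ + 1) * (ℓ + 1) :=
      Nat.add_one_mul_choose_eq s ℓ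
    rw [Nat.succ_sub_one, Nat.factorial_succ]
    calc (s + 1) * (ℓ.factorial * s.choose ℓ)
        = ℓ.factorial * ((s + 1) * s.choose ℓ) := by ring
      _ = ℓ.factorial * ((s + 1).choose (ℓ + 1) * (ℓ + 1)) := by rw [h]
      _ = (ℓ + 1) * ℓ.factorial * (s + 1).choose (ℓ + 1) := by ring

lemma iter_deriv_bernoulli (ℓ n : ℕ) :
    Polynomial.derivative^[ℓ] (Polynomial.bernoulli n)
      = ((ℓ.factorial * n.choose ℓ : ℕ) : ℚ) • Polynomial.bernoulli (n - ℓ) := by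
  induction ℓ generalizing n with
  | zero => simp
  | succ ℓ ih =>
    rw [Function.iterate_succ_apply, derivative_bernoulli,
      show ((n : Polynomial ℚ) * Polynomial.bernoulli (n - 1))
          = (n : ℚ) • Polynomial.bernoulli (n - 1) from by rw [smul_eq_C_mul, C_eq_natCast],
      iterate_derivative_smul, ih, smul_smul,
      show n - 1 - ℓ = n - (ℓ + 1) from by omega]
    congr 1
    exact_mod_cast natid n ℓ

lemma iter_deriv_monomial (ℓ d : ℕ) (c : ℚ) :
    Polynomial.derivative^[ℓ] (monomial d c)
      = ((ℓ.factorial * d.choose ℓ : ℕ) : ℚ) • monomial (d - ℓ) c := by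
  rw [← smul_X_eq_monomial, iterate_derivative_smul, iterate_derivative_X_pow_eq_smul,
    Nat.descFactorial_eq_factorial_mul_choose, ← smul_X_eq_monomial, smul_smul, smul_smul,
    mul_comm]

theorem alzer_kwong_corollary_1 (m : ℕ) (hm : 0 < m) (ℓ : ℕ) (hℓ : ℓ + 1 ≤ m) (x : ℚ) :
    ∑ k ∈ (Finset.range m).filter (fun k => Odd (k + m)),
      (m.choose k : ℚ) * ((k + m).choose ℓ) * (Polynomial.bernoulli (k + m - ℓ)).eval x
    = (1 / 2) * ∑ j ∈ Finset.range (m + 1),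
        (-1 : ℚ) ^ (j + m) * (m.choose j) * ((j + m - 1).choose ℓ) * (j + m) *
          x ^ (j + m - ℓ - 1) := by
  have key := congrArg (fun p => Polynomial.eval x (Polynomial.derivative^[ℓ] p)) (poly_key m hm)
  simp only [Polynomial.iterate_derivative_sum, Polynomial.iterate_derivative_smul,
    iter_deriv_bernoulli, iter_deriv_monomial, Polynomial.eval_finset_sum, Polynomial.eval_smul,
    Polynomial.eval_monomial, smul_eq_mul] at key
  have h2ℓ : (2 : ℚ) * ℓ.factorial ≠ 0 := by positivity
  apply mul_left_cancel₀ h2ℓ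
  calc 2 * (ℓ.factorial : ℚ) *
        ∑ k ∈ (Finset.range m).filter (fun k => Odd (k + m)),
          (m.choose k : ℚ) * ((k + m).choose ℓ) * (Polynomial.bernoulli (k + m - ℓ)).eval x
      = ∑ k ∈ range (m + 1),
          ((m.choose k : ℚ) - (-1) ^ (k + m) * m.choose k) *
            (((ℓ.factorial * (k + m).choose ℓ : ℕ) : ℚ) *
              (Polynomial.bernoulli (k + m - ℓ)).eval x) := by
        rw [Finset.mul_sum, Finset.sum_filter, Finset.sum_range_succ]
        rw [show ((m.choose m : ℚ) - (-1) ^ (m + m) * m.choose m) = 0 from by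
          rw [Even.neg_one_pow ⟨m, rfl⟩]; ring]
        rw [zero_mul, add_zero]
        refine Finset.sum_congr rfl fun k hk => ?_
        rcases Nat.even_or_odd (k + m) with he | ho
        · rw [if_neg (Nat.not_odd_iff_even.mpr he), Even.neg_one_pow he]
          ring
        · rw [if_pos ho, Odd.neg_one_pow ho]
          push_cast
          ring
    _ = ∑ k ∈ range (m + 1),
          ((-1 : ℚ) ^ (k + m) * m.choose k) *
            (((ℓ.factorial * (k + m - 1).choose ℓ : ℕ) : ℚ) *
              (((k + m : ℕ) : ℚ) * x ^ (k + m - 1 - ℓ))) := key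
    _ = (ℓ.factorial : ℚ) * ∑ j ∈ Finset.range (m + 1),
            (-1 : ℚ) ^ (j + m) * (m.choose j) * ((j + m - 1).choose ℓ) * (j + m) *
              x ^ (j + m - ℓ - 1) := by
        rw [Finset.mul_sum]
        refine Finset.sum_congr rfl fun k hk => ?_
        rw [show k + m - 1 - ℓ = k + m - ℓ - 1 from by omega]
        push_cast
        ring
    _ = 2 * (ℓ.factorial : ℚ) *
          ((1 / 2) * ∑ j ∈ Finset.range (m + 1),
            (-1 : ℚ) ^ (j + m) * (m.choose j) * ((j + m - 1).choose ℓ) * (j + m) *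
              x ^ (j + m - ℓ - 1)) := by ring
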